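/- Reduction step of Appendix A: let s be a positive half-integer and σ₁,...,σ_N ∈ {±s}; define G_N(σ₁,...,σ_N)(u,v) = e^{−2λs∑σ_k} ∏_{k=1}^{N} ∏_{j'} ( e^{(σ_k/(2s))(v−u)} + e^{(σ_k/(2s))(u−v) + 2j'λ + 2λ(∑_{i=k+1}^{N} σ_i − ∑_{i=1}^{k−1} σ_i)} ), where j' ranges over −s+1/2, −s+3/2, ..., s−1/2. If σ_k + σ_{k+1} = 0 for some 1 ≤ k < N (i.e. σ_{k+1} = −σ_k), then G_N(σ₁,...,σ_k,−σ_k,...,σ_N)(u,v) = H(u,v) · G_{N−2}(σ₁,...,σ̂_k,σ̂_{k+1},...,σ_N)(u,v), where H is a function symmetric in (u,v) and the hats denote omission. -/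

import Mathlib

open Finset

noncomputable def Gn (s2 : ℕ) (lam : ℂ) (N : ℕ) (σ : Fin N → ℂ) (u v : ℂ) : ℂ :=
  Complex.exp (-lam * (s2 : ℂ) * ∑ k, σ k) *
    ∏ k : Fin N, ∏ m ∈ range s2,
      (Complex.exp ((σ k / (s2 : ℂ)) * (v - u))
        + Complex.exp ((σ k / (s2 : ℂ)) * (u - v)
            + 2 * lam * (((m : ℂ) + 1) - (s2 : ℂ) / 2 - 1 / 2)
            + 2 * lam * ((∑ i ∈ Finset.Ioi k, σ i) - ∑ i ∈ Finset.Iio k, σ i)))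


/-- Extension of a `Fin M`-indexed family to `ℕ` by zero. -/
noncomputable def GnExt (M : ℕ) (τ : Fin M → ℂ) : ℕ → ℂ :=
  fun n => if h : n < M then τ ⟨n, h⟩ else 0

lemma GnExt_sum_univ (M : ℕ) (τ : Fin M → ℂ) :
    ∑ j, τ j = ∑ m ∈ Finset.range M, GnExt M τ m := by
  rw [← Fin.sum_univ_eq_sum_range]
  exact Finset.sum_congr rfl fun j _ => by simp [GnExt, j.isLt]

lemma GnExt_D (M : ℕ) (τ : Fin M → ℂ) (j : Fin M) :
    (∑ i ∈ Finset.Ioi j, τ i) - ∑ i ∈ Finset.Iio j, τ i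
      = (∑ m ∈ Finset.range M, GnExt M τ m)
        - 2 * (∑ m ∈ Finset.range j.val, GnExt M τ m) - τ j := by
  have hM : 0 < M := j.val.zero_le.trans_lt j.isLt
  have hIio : ∑ i ∈ Finset.Iio j, τ i = ∑ m ∈ Finset.range j.val, GnExt M τ m := by
    rw [← Nat.Iio_eq_range, ← Fin.map_valEmbedding_Iio, Finset.sum_map]
    exact Finset.sum_congr rfl fun i _ => by simp [GnExt, i.isLt]
  have hIoi : ∑ i ∈ Finset.Ioi j, τ i
      = (∑ m ∈ Finset.range M, GnExt M τ m)
        - ∑ m ∈ Finset.range (j.val + 1), GnExt M τ m := by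
    have h1 : ∑ i ∈ Finset.Ioi j, τ i = ∑ m ∈ Finset.Ioc j.val (M - 1), GnExt M τ m := by
      rw [show Finset.Ioc j.val (M - 1) = Finset.Ioo j.val M by ext x; simp only [Finset.mem_Ioc, Finset.mem_Ioo]; omega,
        ← Fin.map_valEmbedding_Ioi, Finset.sum_map]
      exact Finset.sum_congr rfl fun i _ => by simp [GnExt, i.isLt]
    have h2 : Finset.Ioc j.val (M - 1) = Finset.Ico (j.val + 1) M := by
      ext x
      simp only [Finset.mem_Ioc, Finset.mem_Ico]
      omega
    rw [h1, h2, Finset.sum_Ico_eq_sub _ (by omega : j.val + 1 ≤ M)]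
  have hj : GnExt M τ j.val = τ j := by simp [GnExt, j.isLt]
  rw [hIoi, hIio, Finset.sum_range_succ, hj]
  ring

/-- Reduction step of Appendix A: if `σ_k + σ_{k+1} = 0` for some `k < N`, then
`G_N(σ)(u,v)` equals a symmetric function of `(u,v)` times `G_{N−2}` of the sequence
with the entries `k, k+1` omitted. -/
theorem Gn_reduction (s2 : ℕ) (hs2 : 1 ≤ s2) (lam : ℂ)
    (N : ℕ) (σ : Fin N → ℂ)
    (hσ : ∀ i, σ i = (s2 : ℂ) / 2 ∨ σ i = -((s2 : ℂ) / 2))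
    (k : ℕ) (hk : k + 2 ≤ N)
    (hzero : σ ⟨k, by omega⟩ + σ ⟨k + 1, by omega⟩ = 0) :
    ∃ H : ℂ → ℂ → ℂ, (∀ u v, H u v = H v u) ∧
      ∀ u v, Gn s2 lam N σ u v
        = H u v * Gn s2 lam (N - 2)
            (fun i => if h : (i : ℕ) < k then σ ⟨i, by omega⟩ else σ ⟨(i : ℕ) + 2, by omega⟩)
            u v := by
  set σ' : Fin (N - 2) → ℂ :=
    fun i => if h : (i : ℕ) < k then σ ⟨i, by omega⟩ else σ ⟨(i : ℕ) + 2, by omega⟩ with hσ'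
  set f : ℕ → ℂ := GnExt N σ with hf
  set g : ℕ → ℂ := GnExt (N - 2) σ' with hgdef
  set T : ℂ := ∑ m ∈ Finset.range N, f m with hT
  have hflip : f (k + 1) = -f k := by
    have h1 : f k = σ ⟨k, by omega⟩ := by simp [hf, GnExt, show k < N by omega]
    have h2 : f (k + 1) = σ ⟨k + 1, by omega⟩ := by simp [hf, GnExt, show k + 1 < N by omega]
    rw [h1, h2]
    linear_combination hzero
  have hg : ∀ n, g n = if n < k then f n else f (n + 2) := by
    intro n
    by_cases h1 : n < N - 2
    · by_cases h2 : n < k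
      · simp [hgdef, GnExt, hσ', hf, h1, h2, show n < N by omega]
      · simp [hgdef, GnExt, hσ', hf, h1, h2, show n + 2 < N by omega]
    · have h2 : ¬ n < k := by omega
      simp [hgdef, GnExt, hf, h1, h2, show ¬ n + 2 < N by omega]
  have hS : ∀ i : ℕ, (∑ m ∈ Finset.range i, g m)
      = ∑ m ∈ Finset.range (if i < k then i else i + 2), f m := by
    intro i
    by_cases h : i < k
    · rw [if_pos h]
      exact Finset.sum_congr rfl fun m hm => by
        rw [hg m, if_pos (by exact lt_trans (Finset.mem_range.mp hm) h)]
    · rw [if_neg h]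
      have hki : k ≤ i := not_lt.mp h
      clear h
      induction i, hki using Nat.le_induction with
      | base =>
        have hL : (∑ m ∈ Finset.range k, g m) = ∑ m ∈ Finset.range k, f m :=
          Finset.sum_congr rfl fun m hm => by rw [hg m, if_pos (Finset.mem_range.mp hm)]
        rw [hL, show k + 2 = (k + 1) + 1 by ring, Finset.sum_range_succ, Finset.sum_range_succ,
          hflip]
        ring
      | succ i hki ih =>
        rw [Finset.sum_range_succ g i, ih, hg i, if_neg (by omega),
          show i + 1 + 2 = (i + 2) + 1 by omega, Finset.sum_range_succ f (i + 2)]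
  have hT' : (∑ m ∈ Finset.range (N - 2), g m) = T := by
    rw [hS (N - 2), if_neg (by omega), show N - 2 + 2 = N by omega]
  -- abbreviations for the two special factors (independent of u, v)
  refine ⟨fun u v =>
    (∏ m ∈ Finset.range s2,
      (Complex.exp ((f k / (s2 : ℂ)) * (v - u))
        + Complex.exp ((f k / (s2 : ℂ)) * (u - v)
            + 2 * lam * (((m : ℂ) + 1) - (s2 : ℂ) / 2 - 1 / 2)
            + 2 * lam * (T - 2 * (∑ m ∈ Finset.range k, f m) - f k)))) *
    (∏ m ∈ Finset.range s2,
      (Complex.exp ((-f k / (s2 : ℂ)) * (v - u))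
        + Complex.exp ((-f k / (s2 : ℂ)) * (u - v)
            + 2 * lam * (((m : ℂ) + 1) - (s2 : ℂ) / 2 - 1 / 2)
            + 2 * lam * (T - 2 * (∑ m ∈ Finset.range k, f m) - f k)))), ?_, ?_⟩
  · -- symmetry
    intro u v
    have hAB : ∀ x y : ℂ,
        (∏ m ∈ Finset.range s2,
          (Complex.exp ((f k / (s2 : ℂ)) * (y - x))
            + Complex.exp ((f k / (s2 : ℂ)) * (x - y)
                + 2 * lam * (((m : ℂ) + 1) - (s2 : ℂ) / 2 - 1 / 2)
                + 2 * lam * (T - 2 * (∑ m ∈ Finset.range k, f m) - f k))))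
        = ∏ m ∈ Finset.range s2,
          (Complex.exp ((-f k / (s2 : ℂ)) * (x - y))
            + Complex.exp ((-f k / (s2 : ℂ)) * (y - x)
                + 2 * lam * (((m : ℂ) + 1) - (s2 : ℂ) / 2 - 1 / 2)
                + 2 * lam * (T - 2 * (∑ m ∈ Finset.range k, f m) - f k))) := by
      intro x y
      refine Finset.prod_congr rfl fun m _ => ?_
      congr 1
      · exact congrArg Complex.exp (by ring)
      · exact congrArg Complex.exp (by ring)
    beta_reduce
    rw [hAB u v, hAB v u]
    exact mul_comm _ _
  · intro u v
    unfold Gn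
    -- Ψ n : the factor written in terms of ℕ-data
    set Ψ : ℕ → ℂ := fun n =>
      ∏ m ∈ Finset.range s2,
        (Complex.exp ((f n / (s2 : ℂ)) * (v - u))
          + Complex.exp ((f n / (s2 : ℂ)) * (u - v)
              + 2 * lam * (((m : ℂ) + 1) - (s2 : ℂ) / 2 - 1 / 2)
              + 2 * lam * (T - 2 * (∑ m ∈ Finset.range n, f m) - f n))) with hΨ
    have e1 : (∏ j : Fin N, ∏ m ∈ Finset.range s2,
        (Complex.exp ((σ j / (s2 : ℂ)) * (v - u))
          + Complex.exp ((σ j / (s2 : ℂ)) * (u - v)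
              + 2 * lam * (((m : ℂ) + 1) - (s2 : ℂ) / 2 - 1 / 2)
              + 2 * lam * ((∑ i ∈ Finset.Ioi j, σ i) - ∑ i ∈ Finset.Iio j, σ i))))
        = ∏ n ∈ Finset.range N, Ψ n := by
      rw [← Fin.prod_univ_eq_prod_range]
      refine Finset.prod_congr rfl fun j _ => ?_
      have hfj : f j.val = σ j := by simp [hf, GnExt, j.isLt]
      have hD := GnExt_D N σ j
      rw [← hf, ← hT] at hD
      rw [hΨ]
      simp only [hfj, hD]
    have e2 : (∏ j : Fin (N - 2), ∏ m ∈ Finset.range s2,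
        (Complex.exp ((σ' j / (s2 : ℂ)) * (v - u))
          + Complex.exp ((σ' j / (s2 : ℂ)) * (u - v)
              + 2 * lam * (((m : ℂ) + 1) - (s2 : ℂ) / 2 - 1 / 2)
              + 2 * lam * ((∑ i ∈ Finset.Ioi j, σ' i) - ∑ i ∈ Finset.Iio j, σ' i))))
        = ∏ n ∈ Finset.range (N - 2), Ψ (if n < k then n else n + 2) := by
      rw [← Fin.prod_univ_eq_prod_range]
      refine Finset.prod_congr rfl fun j _ => ?_
      have hgj : g j.val = σ' j := by simp [hgdef, GnExt, j.isLt]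
      have hD := GnExt_D (N - 2) σ' j
      rw [← hgdef, hT', hS j.val] at hD
      rw [hΨ]
      by_cases h : j.val < k
      · rw [if_pos h] at hD ⊢
        have hfj : f j.val = σ' j := by rw [← hgj, hg j.val, if_pos h]
        simp only [hfj, hD]
      · rw [if_neg h] at hD ⊢
        have hfj : f (j.val + 2) = σ' j := by rw [← hgj, hg j.val, if_neg h]
        simp only [hfj, hD]
    have e3 : ∏ n ∈ Finset.range N, Ψ n
        = (Ψ k * Ψ (k + 1)) * ∏ n ∈ Finset.range (N - 2), Ψ (if n < k then n else n + 2) := by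
      have hR : (∏ n ∈ Finset.range (N - 2), Ψ (if n < k then n else n + 2))
          = (∏ n ∈ Finset.range k, Ψ n) * ∏ n ∈ Finset.Ico (k + 2) N, Ψ n := by
        rw [← Finset.prod_range_mul_prod_Ico _ (show k ≤ N - 2 by omega)]
        congr 1
        · exact Finset.prod_congr rfl fun m hm => by rw [if_pos (Finset.mem_range.mp hm)]
        · rw [show (∏ n ∈ Finset.Ico k (N - 2), Ψ (if n < k then n else n + 2))
              = ∏ n ∈ Finset.Ico k (N - 2), Ψ (n + 2) from
              Finset.prod_congr rfl fun m hm => by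
                rw [if_neg (not_lt.mpr (Finset.mem_Ico.mp hm).1)],
            Finset.prod_Ico_add' Ψ k (N - 2) 2, show N - 2 + 2 = N by omega]
      rw [hR, ← Finset.prod_range_mul_prod_Ico Ψ (show k + 2 ≤ N by omega),
        show k + 2 = (k + 1) + 1 by ring, Finset.prod_range_succ, Finset.prod_range_succ]
      ring
    have hΨk1 : Ψ (k + 1) = ∏ m ∈ Finset.range s2,
        (Complex.exp ((-f k / (s2 : ℂ)) * (v - u))
          + Complex.exp ((-f k / (s2 : ℂ)) * (u - v)
              + 2 * lam * (((m : ℂ) + 1) - (s2 : ℂ) / 2 - 1 / 2)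
              + 2 * lam * (T - 2 * (∑ m ∈ Finset.range k, f m) - f k))) := by
      rw [hΨ]
      refine Finset.prod_congr rfl fun m _ => ?_
      rw [Finset.sum_range_succ, hflip]
      congr 1 <;> exact congrArg Complex.exp (by ring)
    have hsum1 : ∑ j : Fin N, σ j = T := by rw [GnExt_sum_univ N σ, ← hf, ← hT]
    have hsum2 : ∑ j : Fin (N - 2), σ' j = T := by rw [GnExt_sum_univ (N - 2) σ', ← hgdef, hT']
    rw [hsum1, hsum2, e1, e2, e3, hΨk1, hΨ]
    ring
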